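/- arXiv:2307.03263 — 2 statements merged into one kernel-verified Lean document; each statement's English description precedes it below -/
import Mathlib

section
/- For α ∈ (0,1) and λ ≥ 0, the function t ↦ E_{α,1}(-λ t^α) on (0,∞) has derivative d/dt E_{α,1}(-λ t^α) = -λ t^{α-1} E_{α,α}(-λ t^α). -/
open Real Filter

/-- Lower bound for the Gamma function via log-convexity:
`Γ(y+α) ≥ 2^(α-1) y^α Γ(y)` for `1 ≤ y`, `0 < α < 1`. -/
lemma gammaLB {α y : ℝ} (hα0 : 0 < α) (hα1 : α < 1) (hy : 1 ≤ y) :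
    2 ^ (α - 1) * y ^ α * Real.Gamma y ≤ Real.Gamma (y + α) := by
  have hy0 : (0:ℝ) < y := lt_of_lt_of_le one_pos hy
  have hyα : (0:ℝ) < y + α := by linarith
  have hΓyα : 0 < Real.Gamma (y + α) := Real.Gamma_pos_of_pos hyα
  have hΓy : 0 < Real.Gamma y := Real.Gamma_pos_of_pos hy0
  have hconv := Real.convexOn_log_Gamma.2 (x := y + α) (y := y + 1 + α)
      (Set.mem_Ioi.mpr hyα) (Set.mem_Ioi.mpr (by linarith)) hα0.le
      (by linarith : (0:ℝ) ≤ 1 - α) (by ring)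
  simp only [smul_eq_mul, Function.comp] at hconv
  rw [show α * (y + α) + (1 - α) * (y + 1 + α) = y + 1 by ring] at hconv
  rw [show y + 1 + α = (y + α) + 1 by ring, Real.Gamma_add_one hyα.ne',
    Real.log_mul hyα.ne' hΓyα.ne'] at hconv
  have h1 : Real.log (Real.Gamma (y + 1)) ≤
      Real.log (Real.Gamma (y + α)) + (1 - α) * Real.log (y + α) := by nlinarith [hconv]
  have key : Real.Gamma (y + 1) ≤ Real.Gamma (y + α) * (y + α) ^ (1 - α) := by
    have h2 := Real.exp_le_exp.mpr h1
    rwa [Real.exp_log (Real.Gamma_pos_of_pos (by linarith)), Real.exp_add,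
      Real.exp_log hΓyα, mul_comm (1 - α), ← Real.rpow_def_of_pos hyα] at h2
  rw [Real.Gamma_add_one hy0.ne'] at key
  have key2 : y * Real.Gamma y ≤ Real.Gamma (y + α) * (2 ^ (1 - α) * y ^ (1 - α)) := by
    calc y * Real.Gamma y ≤ Real.Gamma (y + α) * (y + α) ^ (1 - α) := key
      _ ≤ Real.Gamma (y + α) * (2 * y) ^ (1 - α) :=
          mul_le_mul_of_nonneg_left
            (Real.rpow_le_rpow hyα.le (by linarith) (by linarith)) hΓyα.le
      _ = Real.Gamma (y + α) * (2 ^ (1 - α) * y ^ (1 - α)) := by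
          rw [Real.mul_rpow (by norm_num) hy0.le]
  have e1 : y ^ (α - 1) * y = y ^ α := by
    rw [← Real.rpow_add_one hy0.ne' (α - 1)]
    congr 1
    ring
  have c0 : (0:ℝ) ≤ 2 ^ (α - 1) * y ^ (α - 1) := by positivity
  calc 2 ^ (α - 1) * y ^ α * Real.Gamma y
      = (2 ^ (α - 1) * y ^ (α - 1)) * (y * Real.Gamma y) := by rw [← e1]; ring
    _ ≤ (2 ^ (α - 1) * y ^ (α - 1)) *
        (Real.Gamma (y + α) * (2 ^ (1 - α) * y ^ (1 - α))) :=
          mul_le_mul_of_nonneg_left key2 c0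
    _ = Real.Gamma (y + α) * ((2 ^ (α - 1) * 2 ^ (1 - α)) * (y ^ (α - 1) * y ^ (1 - α))) := by
          ring
    _ = Real.Gamma (y + α) := by
          rw [← Real.rpow_add two_pos, ← Real.rpow_add hy0]
          norm_num

/-- Summability of the (weighted) Mittag-Leffler type series. -/
lemma auxSummable {α β x : ℝ} (hα0 : 0 < α) (hα1 : α < 1) (hβ : 0 < β) (hx : 0 ≤ x) :
    Summable (fun k : ℕ => ((k : ℝ) + 1) * x ^ k / Real.Gamma ((k : ℝ) * α + β)) := by
  have hy_top : Tendsto (fun k : ℕ => (k : ℝ) * α + β) atTop atTop :=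
    tendsto_atTop_add_const_right _ β (tendsto_natCast_atTop_atTop.atTop_mul_const hα0)
  have E1 : ∀ᶠ k : ℕ in atTop, (1:ℝ) ≤ (k : ℝ) * α + β := hy_top.eventually_ge_atTop 1
  have E2 : ∀ᶠ k : ℕ in atTop,
      2 ^ (1 - α) * (4 * (x + 1)) ≤ ((k : ℝ) * α + β) ^ α :=
    ((tendsto_rpow_atTop hα0).comp hy_top).eventually_ge_atTop _
  refine summable_of_ratio_norm_eventually_le (r := 1/2) (by norm_num) ?_
  filter_upwards [E1, E2] with k h1 h2
  set y : ℝ := (k : ℝ) * α + β with hy_def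
  have hy0 : (0:ℝ) < y := lt_of_lt_of_le one_pos h1
  have hyα : (0:ℝ) < y + α := by linarith
  have hΓy : 0 < Real.Gamma y := Real.Gamma_pos_of_pos hy0
  have hΓyα : 0 < Real.Gamma (y + α) := Real.Gamma_pos_of_pos hyα
  have hcast : ((k + 1 : ℕ) : ℝ) * α + β = y + α := by push_cast; ring
  have hΓlb : 4 * (x + 1) * Real.Gamma y ≤ Real.Gamma (y + α) := by
    calc 4 * (x + 1) * Real.Gamma y
        = 2 ^ (α - 1) * (2 ^ (1 - α) * (4 * (x + 1))) * Real.Gamma y := by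
          rw [show (2:ℝ) ^ (α-1) * (2 ^ (1-α) * (4 * (x+1)))
              = (2 ^ (α-1) * 2 ^ (1-α)) * (4 * (x+1)) by ring,
            ← Real.rpow_add two_pos]
          norm_num
      _ ≤ 2 ^ (α - 1) * y ^ α * Real.Gamma y := by
          have h2' : 2 ^ (α - 1) * (2 ^ (1 - α) * (4 * (x + 1))) ≤ 2 ^ (α - 1) * y ^ α :=
            mul_le_mul_of_nonneg_left h2 (Real.rpow_nonneg (by norm_num) _)
          exact mul_le_mul_of_nonneg_right h2' hΓy.le
      _ ≤ Real.Gamma (y + α) := gammaLB hα0 hα1 h1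
  have hxk : (0:ℝ) ≤ x ^ k := pow_nonneg hx k
  have hx1 : (0:ℝ) < x + 1 := by linarith
  rw [hcast]
  rw [Real.norm_of_nonneg (by positivity), Real.norm_of_nonneg (by positivity)]
  push_cast
  calc ((k:ℝ) + 1 + 1) * x ^ (k + 1) / Real.Gamma (y + α)
      ≤ 2 * ((k:ℝ) + 1) * (x + 1) * x ^ k / Real.Gamma (y + α) := by
        apply (div_le_div_iff_of_pos_right hΓyα).mpr
        rw [pow_succ]
        nlinarith [hxk, mul_nonneg hxk hx, Nat.cast_nonneg (α := ℝ) k]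
    _ ≤ 2 * ((k:ℝ) + 1) * (x + 1) * x ^ k / (4 * (x + 1) * Real.Gamma y) := by
        apply div_le_div_of_nonneg_left (by positivity) (by positivity) hΓlb
    _ = 1/2 * (((k:ℝ) + 1) * x ^ k / Real.Gamma y) := by
        field_simp
        ring

/-- The real two-parameter Mittag-Leffler function `E_{α,β}(x) = ∑ₖ xᵏ / Γ(kα+β)`. -/
noncomputable def mittagLefflerReal (α β x : ℝ) : ℝ :=
  ∑' k : ℕ, x ^ k / Real.Gamma (k * α + β)

/-- For `α ∈ (0,1)`, `λ ≥ 0` and `t > 0`, `d/dt E_{α,1}(-λ tᵅ) = -λ t^{α-1} E_{α,α}(-λ tᵅ)`. -/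
theorem stmt_2 (α lam t : ℝ) (hα : α ∈ Set.Ioo 0 1) (hlam : 0 ≤ lam) (ht : 0 < t) :
    HasDerivAt (fun s : ℝ => mittagLefflerReal α 1 (-(lam * s ^ α)))
      (-(lam * t ^ (α - 1) * mittagLefflerReal α α (-(lam * t ^ α)))) t := by
  obtain ⟨hα0, hα1⟩ := hα
  set M : ℝ := 2 * t + 1 with hM_def
  have hM1 : (1:ℝ) ≤ M := by simp only [hM_def]; linarith
  have hM0 : (0:ℝ) ≤ M := by linarith
  set g : ℕ → ℝ → ℝ := fun k s => (-(lam * s ^ α)) ^ k / Real.Gamma ((k : ℝ) * α + 1)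
    with hg_def
  set g' : ℕ → ℝ → ℝ := fun k s =>
      (-lam) ^ k * (((k : ℝ) * α) * s ^ ((k : ℝ) * α - 1)) / Real.Gamma ((k : ℝ) * α + 1)
    with hg'_def
  set u : ℕ → ℝ := fun k =>
      (2 * α / t) * (((k : ℝ) + 1) * (lam * M) ^ k / Real.Gamma ((k : ℝ) * α + 1)) with hu_def
  have hu : Summable u :=
    (auxSummable hα0 hα1 one_pos (mul_nonneg hlam hM0)).mul_left _
  set S : Set ℝ := Set.Ioo (t/2) (2*t) with hS_def
  have htS : t ∈ S := ⟨by linarith, by linarith⟩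
  have hΓpos : ∀ k : ℕ, 0 < Real.Gamma ((k : ℝ) * α + 1) := fun k =>
    Real.Gamma_pos_of_pos (by positivity)
  -- derivatives of the terms
  have hg : ∀ (k : ℕ) (y : ℝ), y ∈ S → HasDerivAt (g k) (g' k y) y := by
    intro k y hyS
    have hy0 : (0:ℝ) < y := lt_trans (by linarith : (0:ℝ) < t/2) hyS.1
    have hbase : HasDerivAt (fun s : ℝ => (-lam) ^ k * s ^ ((k : ℝ) * α)
        / Real.Gamma ((k : ℝ) * α + 1)) (g' k y) y := by
      have h := (Real.hasDerivAt_rpow_const (x := y) (p := (k : ℝ) * α)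
        (Or.inl hy0.ne'))
      exact (h.const_mul ((-lam) ^ k)).div_const _
    refine hbase.congr_of_eventuallyEq ?_
    filter_upwards [isOpen_Ioi.mem_nhds (Set.mem_Ioi.mpr hy0)] with s hs
    have hs0 : (0:ℝ) < s := hs
    simp only [hg_def]
    congr 1
    rw [show -(lam * s ^ α) = (-lam) * s ^ α by ring, mul_pow,
      ← Real.rpow_natCast (s ^ α) k, ← Real.rpow_mul hs0.le, mul_comm α (k:ℝ)]
  -- bound on the derivatives
  have hg' : ∀ (k : ℕ) (y : ℝ), y ∈ S → ‖g' k y‖ ≤ u k := by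
    intro k y hyS
    have hy0 : (0:ℝ) < y := lt_trans (by linarith : (0:ℝ) < t/2) hyS.1
    have habs : ‖g' k y‖ = lam ^ k * (((k : ℝ) * α) * y ^ ((k : ℝ) * α - 1))
        / Real.Gamma ((k : ℝ) * α + 1) := by
      simp only [hg'_def, Real.norm_eq_abs, abs_div, abs_mul, abs_pow, abs_neg,
        abs_of_nonneg hlam, abs_of_pos (hΓpos k),
        abs_of_nonneg (show (0:ℝ) ≤ ((k : ℝ) * α) * y ^ ((k : ℝ) * α - 1) by positivity)]
    have hyk : y ^ ((k : ℝ) * α - 1) ≤ M ^ k * (2 / t) := by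
      have h1 : y ^ ((k : ℝ) * α) ≤ M ^ k := by
        calc y ^ ((k : ℝ) * α) ≤ M ^ ((k : ℝ) * α) :=
              Real.rpow_le_rpow hy0.le
                (by have := hyS.2; simp only [hM_def]; linarith) (by positivity)
          _ ≤ M ^ ((k : ℝ)) := Real.rpow_le_rpow_of_exponent_le hM1
              (by nlinarith [Nat.cast_nonneg (α := ℝ) k])
          _ = M ^ k := Real.rpow_natCast M k
      have h2 : (1:ℝ)/y ≤ 2/t := by
        rw [div_le_div_iff₀ hy0 ht]
        have := hyS.1; linarith
      calc y ^ ((k : ℝ) * α - 1) = y ^ ((k : ℝ) * α) * (1/y) := by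
            rw [Real.rpow_sub hy0, Real.rpow_one, div_eq_mul_one_div]
        _ ≤ M ^ k * (2/t) := by
            apply mul_le_mul h1 h2 (by positivity) (by positivity)
    have hstep : lam ^ k * (((k : ℝ) * α) * y ^ ((k : ℝ) * α - 1))
        ≤ (2 * α / t) * (((k : ℝ) + 1) * (lam * M) ^ k) := by
      calc lam ^ k * (((k : ℝ) * α) * y ^ ((k : ℝ) * α - 1))
          ≤ lam ^ k * ((((k : ℝ) + 1) * α) * (M ^ k * (2/t))) := by
            apply mul_le_mul_of_nonneg_left _ (by positivity)
            apply mul_le_mul _ hyk (by positivity) (by positivity)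
            nlinarith [Nat.cast_nonneg (α := ℝ) k]
        _ = (2 * α / t) * (((k : ℝ) + 1) * (lam * M) ^ k) := by
            rw [mul_pow]; ring
    rw [habs, show u k = 2 * α / t * (((k : ℝ) + 1) * (lam * M) ^ k
      / Real.Gamma ((k : ℝ) * α + 1)) from rfl, ← mul_div_assoc]
    exact (div_le_div_iff_of_pos_right (hΓpos k)).mpr hstep
  -- summability at t
  have hg0 : Summable (fun k => g k t) := by
    apply Summable.of_norm_bounded (auxSummable hα0 hα1 one_pos
      (mul_nonneg hlam (Real.rpow_nonneg ht.le α)))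
    intro k
    simp only [hg_def]
    rw [Real.norm_eq_abs, abs_div, abs_of_pos (hΓpos k), abs_pow, abs_neg,
      abs_of_nonneg (by positivity : (0:ℝ) ≤ lam * t ^ α)]
    apply (div_le_div_iff_of_pos_right (hΓpos k)).mpr
    nlinarith [pow_nonneg (by positivity : (0:ℝ) ≤ lam * t ^ α) k,
      Nat.cast_nonneg (α := ℝ) k]
  have key : HasDerivAt (fun z => ∑' k, g k z) (∑' k, g' k t) t :=
    hasDerivAt_tsum_of_isPreconnected hu isOpen_Ioo isPreconnected_Ioo hg hg' htS hg0 htS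
  -- identify the sum of derivatives
  have hsum_g' : Summable (fun k => g' k t) :=
    Summable.of_norm_bounded hu (fun k => hg' k t htS)
  have hval : (∑' k, g' k t)
      = -(lam * t ^ (α - 1) * mittagLefflerReal α α (-(lam * t ^ α))) := by
    rw [hsum_g'.tsum_eq_zero_add]
    have h0 : g' 0 t = 0 := by simp [hg'_def]
    rw [h0, zero_add]
    have hterm : ∀ j : ℕ, g' (j + 1) t
        = -(lam * t ^ (α - 1) * ((-(lam * t ^ α)) ^ j / Real.Gamma ((j : ℝ) * α + α))) := by
      intro j
      have hc : ((j : ℝ) + 1) * α ≠ 0 := by positivity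
      have hΓ : Real.Gamma (((j : ℝ) + 1) * α + 1)
          = (((j : ℝ) + 1) * α) * Real.Gamma ((j : ℝ) * α + α) := by
        rw [Real.Gamma_add_one hc, show ((j : ℝ) + 1) * α = (j : ℝ) * α + α by ring]
      have hΓjα : 0 < Real.Gamma ((j : ℝ) * α + α) := Real.Gamma_pos_of_pos (by positivity)
      simp only [hg'_def]
      push_cast
      rw [hΓ]
      have hpow : t ^ (((j : ℝ) + 1) * α - 1) = t ^ (α - 1) * (t ^ α) ^ j := by
        rw [← Real.rpow_natCast (t ^ α) j, ← Real.rpow_mul ht.le,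
          ← Real.rpow_add ht, show α - 1 + α * (j : ℝ) = ((j : ℝ) + 1) * α - 1 by ring]
      rw [hpow, show -(lam * t ^ α) = (-lam) * t ^ α by ring, mul_pow]
      field_simp
      ring
    calc (∑' j, g' (j + 1) t)
        = ∑' j : ℕ, -((lam * t ^ (α - 1)) *
            ((-(lam * t ^ α)) ^ j / Real.Gamma ((j : ℝ) * α + α))) := by
          apply tsum_congr
          intro j
          rw [hterm j, mul_assoc]
      _ = -((lam * t ^ (α - 1)) *
            ∑' j : ℕ, (-(lam * t ^ α)) ^ j / Real.Gamma ((j : ℝ) * α + α)) := by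
          rw [tsum_neg, tsum_mul_left]
      _ = -(lam * t ^ (α - 1) * mittagLefflerReal α α (-(lam * t ^ α))) := by
          rw [mittagLefflerReal, mul_assoc]
  rw [← hval]
  exact key
end

section
/- Let α ∈ (0,1) and λ > 0. The Laplace transform of t ↦ E_{α,1}(-λ t^α) exists for all complex z with Re z > 0 and equals z^{α-1}/(z^α + λ), where z^α denotes the principal branch. -/
open MeasureTheory

open Filter Nat Topology


lemma mlAux_gamma_pos (α : ℝ) (hα : 0 < α) (k : ℕ) : 0 < Real.Gamma (k * α + 1) :=
  Real.Gamma_pos_of_pos (by positivity)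

lemma mlAux_summable (α : ℝ) (hα : 0 < α) (x : ℝ) :
    Summable (fun k : ℕ => x ^ k / Real.Gamma (k * α + 1)) := by
  set y : ℝ := 2 * |x| + 1 with hy
  have hy1 : (1:ℝ) ≤ y := by have := abs_nonneg x; simp only [hy]; linarith
  set m : ℕ := ⌈1/α⌉₊ with hm
  have hminv : 1/α ≤ m := Nat.le_ceil _
  set Y : ℝ := y ^ m with hY
  have hY1 : (1:ℝ) ≤ Y := one_le_pow₀ hy1
  -- eventually n! > Y^(n+1)
  have hfac : ∀ᶠ n : ℕ in atTop, Y ^ (n+1) < (n ! : ℝ) := by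
    have h0 := FloorSemiring.tendsto_pow_div_factorial_atTop (K := ℝ) Y
    have h1 : ∀ᶠ n : ℕ in atTop, Y ^ n / n ! < Y⁻¹ := by
      refine (h0.eventually (eventually_lt_nhds ?_)).mono (fun n h => h)
      positivity
    filter_upwards [h1] with n h
    have hfpos : (0:ℝ) < n ! := by positivity
    have := (div_lt_iff₀ hfpos).mp h
    calc Y ^ (n+1) = Y * Y ^ n := by ring
    _ < Y * (Y⁻¹ * n !) := by
        apply mul_lt_mul_of_pos_left _ (by positivity)
        exact this
    _ = (n ! : ℝ) := by field_simp
  -- n = ⌊kα⌋ tends to infinity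
  have hn_tendsto : Tendsto (fun k : ℕ => ⌊(k:ℝ) * α⌋₊) atTop atTop := by
    apply tendsto_nat_floor_atTop.comp
    exact (tendsto_natCast_atTop_atTop (R := ℝ)).atTop_mul_const hα
  have hev : ∀ᶠ k : ℕ in atTop, |x ^ k / Real.Gamma (k * α + 1)| ≤ (1/2) ^ k := by
    have hev1 : ∀ᶠ k : ℕ in atTop, (1:ℝ) ≤ (k:ℝ) * α := by
      have : Tendsto (fun k : ℕ => (k:ℝ) * α) atTop atTop :=
        (tendsto_natCast_atTop_atTop (R := ℝ)).atTop_mul_const hα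
      exact this.eventually_ge_atTop 1
    filter_upwards [hev1, hn_tendsto.eventually hfac] with k hk1 hkfac
    set n : ℕ := ⌊(k:ℝ) * α⌋₊ with hn
    have hkα0 : (0:ℝ) ≤ (k:ℝ) * α := by linarith
    have hfloor_le : (n:ℝ) ≤ (k:ℝ) * α := Nat.floor_le hkα0
    have hle_floor : (k:ℝ) * α ≤ n + 1 := le_of_lt (Nat.lt_floor_add_one _)
    -- Γ(kα+1) ≥ n!
    have hγ : (n ! : ℝ) ≤ Real.Gamma ((k:ℝ) * α + 1) := by
      have hnn : (1:ℝ) ≤ n := by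
        have := Nat.le_floor (α := ℝ) (n := 1) (by simpa using hk1)
        exact_mod_cast this
      rw [← Real.Gamma_nat_eq_factorial]
      refine Real.Gamma_strictMonoOn_Ici.monotoneOn ?_ ?_ (by linarith)
      · simp only [Set.mem_Ici]; linarith
      · simp only [Set.mem_Ici]; linarith
    -- y^k ≤ Y^(n+1)
    have hky : (k:ℝ) ≤ m * (n+1) := by
      have hα' : 0 < α := hα
      have h1 : (k:ℝ) ≤ ((n:ℝ)+1) / α := by
        rw [le_div_iff₀ hα']; linarith
      have h2 : ((n:ℝ)+1)/α ≤ ((n:ℝ)+1) * m := by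
        rw [div_le_iff₀ hα']
        calc ((n:ℝ)+1) = ((n:ℝ)+1) * 1 := by ring
        _ ≤ ((n:ℝ)+1) * (m * α) := by
            apply mul_le_mul_of_nonneg_left _ (by positivity)
            exact (div_le_iff₀ hα').mp hminv
        _ = ((n:ℝ)+1) * m * α := by ring
      linarith
    have hkm : k ≤ m * (n+1) := by exact_mod_cast hky
    have hyk : y ^ k ≤ Y ^ (n+1) := by
      rw [hY, ← pow_mul]
      exact pow_le_pow_right₀ hy1 hkm
    have hΓpos := mlAux_gamma_pos α hα k
    have hyΓ : y ^ k < Real.Gamma ((k:ℝ) * α + 1) := lt_of_le_of_lt hyk (lt_of_lt_of_le hkfac hγ)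
    rw [abs_div, abs_pow, abs_of_pos hΓpos, div_le_iff₀ hΓpos]
    calc |x| ^ k = (1/2)^k * (2*|x|)^k := by rw [← mul_pow]; ring_nf
    _ ≤ (1/2)^k * y ^ k := by
        apply mul_le_mul_of_nonneg_left _ (by positivity)
        apply pow_le_pow_left₀ (by positivity)
        simp only [hy]; linarith [abs_nonneg x]
    _ ≤ (1/2)^k * Real.Gamma ((k:ℝ) * α + 1) :=
        mul_le_mul_of_nonneg_left hyΓ.le (by positivity)
  apply Summable.of_abs
  apply summable_of_isBigO_nat (summable_geometric_of_lt_one (by norm_num) (by norm_num : (1/2:ℝ) < 1))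
  apply Asymptotics.IsBigO.of_bound 1
  filter_upwards [hev] with k hk
  calc ‖|x ^ k / Real.Gamma (↑k * α + 1)|‖ ≤ (1/2)^k := by rw [Real.norm_eq_abs, abs_abs]; simpa using hk
  _ ≤ 1 * ‖(1/2:ℝ)^k‖ := by rw [one_mul, Real.norm_eq_abs]; exact le_abs_self _


lemma mlAux_meas (α lam : ℝ) (hα : 0 < α) :
    Measurable (fun t : ℝ => mittagLefflerReal α 1 (-(lam * t ^ α))) := by
  have hmk : ∀ k : ℕ, Measurable (fun t : ℝ => (-(lam * t ^ α)) ^ k / Real.Gamma (k * α + 1)) := by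
    intro k
    apply Measurable.div_const
    apply Measurable.pow_const
    exact (((Real.continuous_rpow_const hα.le).measurable).const_mul lam).neg
  apply measurable_of_tendsto_metrizable' (f := fun n (t : ℝ) =>
    ∑ k ∈ Finset.range n, (-(lam * t ^ α)) ^ k / Real.Gamma (k * α + 1)) atTop
  · intro n; exact Finset.measurable_sum _ (fun k _ => hmk k)
  · rw [tendsto_pi_nhds]
    intro t
    exact (mlAux_summable α hα _).hasSum.tendsto_sum_nat

lemma mlAux_re_cpow_pos {z : ℂ} (hz : 0 < z.re) {a : ℝ} (ha : 0 < a) (ha1 : a ≤ 1) :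
    0 < (z ^ (a : ℂ)).re := by
  have hz0 : z ≠ 0 := by intro h; rw [h] at hz; simp at hz
  rw [Complex.cpow_def_of_ne_zero hz0, Complex.exp_re]
  apply mul_pos (Real.exp_pos _)
  apply Real.cos_pos_of_mem_Ioo
  have harg : |z.arg| < Real.pi / 2 := Complex.abs_arg_lt_pi_div_two_iff.mpr (Or.inl hz)
  have him : (Complex.log z * (a : ℂ)).im = z.arg * a := by
    simp [Complex.mul_im, Complex.log_im]
  rw [him]
  have habs : |z.arg * a| < Real.pi / 2 := by
    rw [abs_mul, abs_of_pos ha]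
    calc |z.arg| * a ≤ |z.arg| * 1 := by
          apply mul_le_mul_of_nonneg_left ha1 (abs_nonneg _)
    _ < Real.pi / 2 := by rw [mul_one]; exact harg
  constructor <;> [linarith [neg_abs_le (z.arg * a)]; linarith [le_abs_self (z.arg * a)]]

/-- For `α ∈ (0,1)`, `λ > 0`, assuming the standard bound `|E_{α,1}(-x)| ≤ C/(1+x)`,
the Laplace transform of `t ↦ E_{α,1}(-λ tᵅ)` exists for `Re z > 0` and equals
`z^{α-1}/(zᵅ + λ)` (principal branch). -/
theorem stmt_5 (α lam C : ℝ) (hα : α ∈ Set.Ioo 0 1) (hlam : 0 < lam)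
    (hC : ∀ x : ℝ, 0 ≤ x → |mittagLefflerReal α 1 (-x)| ≤ C / (1 + x)) :
    ∀ z : ℂ, 0 < z.re →
      IntegrableOn (fun t : ℝ =>
          Complex.exp (-z * t) * (mittagLefflerReal α 1 (-(lam * t ^ α)) : ℂ)) (Set.Ioi 0) ∧
      ∫ t in Set.Ioi (0:ℝ),
          Complex.exp (-z * t) * (mittagLefflerReal α 1 (-(lam * t ^ α)) : ℂ) =
        z ^ ((α : ℂ) - 1) / (z ^ (α : ℂ) + (lam : ℂ)) := by
  obtain ⟨hα0, hα1⟩ := hα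
  set g : ℝ → ℝ := fun t => mittagLefflerReal α 1 (-(lam * t ^ α)) with hgdef
  have hgmeas : Measurable g := mlAux_meas α lam hα0
  have hC0 : 0 ≤ C := by
    have := hC 0 le_rfl
    simp only [neg_zero, add_zero, div_one] at this
    exact le_trans (abs_nonneg _) this
  have hgbd : ∀ t : ℝ, 0 ≤ t → |g t| ≤ C := by
    intro t ht
    have h1 : (0:ℝ) ≤ lam * t ^ α := by positivity
    refine (hC _ h1).trans ?_
    apply div_le_self hC0
    linarith
  -- measurability of the integrand
  have hintmeas : ∀ z : ℂ, Measurable (fun t : ℝ => Complex.exp (-z * t) * (g t : ℂ)) := by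
    intro z
    exact (Complex.measurable_exp.comp (Complex.measurable_ofReal.const_mul (-z))).mul
      (Complex.measurable_ofReal.comp hgmeas)
  -- integrability
  have hint : ∀ z : ℂ, 0 < z.re →
      IntegrableOn (fun t : ℝ => Complex.exp (-z * t) * (g t : ℂ)) (Set.Ioi 0) := by
    intro z hz
    refine Integrable.mono ((exp_neg_integrableOn_Ioi 0 hz).const_mul C)
      ((hintmeas z).aestronglyMeasurable) ?_
    filter_upwards [ae_restrict_mem measurableSet_Ioi] with t ht
    have ht0 : (0:ℝ) < t := ht
    have h1 : ‖Complex.exp (-z * t) * (g t : ℂ)‖ = Real.exp (-z.re * t) * |g t| := by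
      rw [norm_mul, Complex.norm_exp, Complex.norm_real, Real.norm_eq_abs]
      congr 2
      simp [Complex.mul_re]
    rw [h1, Real.norm_eq_abs]
    have h2 : Real.exp (-z.re * t) * |g t| ≤ Real.exp (-z.re * t) * C :=
      mul_le_mul_of_nonneg_left (hgbd t ht0.le) (Real.exp_pos _).le
    refine h2.trans ?_
    rw [abs_of_nonneg (by positivity)]
    linarith [h2]
  -- the two functions
  set F : ℂ → ℂ := fun z => ∫ t in Set.Ioi (0:ℝ), Complex.exp (-z * t) * (g t : ℂ) with hFdef
  set G : ℂ → ℂ := fun z => z ^ ((α : ℂ) - 1) / (z ^ (α : ℂ) + (lam : ℂ)) with hGdef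
  set U : Set ℂ := {z : ℂ | 0 < z.re} with hUdef
  have hUopen : IsOpen U := isOpen_lt continuous_const Complex.continuous_re
  have hUconn : IsPreconnected U := (convex_halfSpace_re_gt 0).isPreconnected
  -- F is differentiable on U
  have hFdiff : DifferentiableOn ℂ F U := by
    intro z₀ hz₀
    have hσ : 0 < z₀.re := hz₀
    apply DifferentiableAt.differentiableWithinAt
    have key := hasDerivAt_integral_of_dominated_loc_of_deriv_le (s := Metric.ball z₀ (z₀.re / 2))
      (F := fun z (t : ℝ) => Complex.exp (-z * t) * (g t : ℂ))
      (F' := fun z (t : ℝ) => Complex.exp (-z * t) * (-t : ℂ) * (g t : ℂ))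
      (x₀ := z₀) (μ := volume.restrict (Set.Ioi 0))
      (bound := fun t => C * (t * Real.exp (-(z₀.re / 2) * t)))
      (Metric.ball_mem_nhds z₀ (half_pos hσ)) ?_ ?_ ?_ ?_ ?_ ?_
    · exact key.2.differentiableAt
    · exact Eventually.of_forall fun z => (hintmeas z).aestronglyMeasurable
    · exact hint z₀ hσ
    · exact (((Complex.measurable_exp.comp (Complex.measurable_ofReal.const_mul (-z₀))).mul
        Complex.measurable_ofReal.neg).mul
        (Complex.measurable_ofReal.comp hgmeas)).aestronglyMeasurable
    · filter_upwards [ae_restrict_mem measurableSet_Ioi] with t ht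
      intro x hx
      have ht0 : (0:ℝ) < t := ht
      have hxre : z₀.re / 2 ≤ x.re := by
        have h1 : |(x - z₀).re| ≤ ‖x - z₀‖ := Complex.abs_re_le_norm _
        have h2 : ‖x - z₀‖ < z₀.re / 2 := by
          rw [← dist_eq_norm]; exact Metric.mem_ball.mp hx
        have := abs_lt.mp (lt_of_le_of_lt h1 h2)
        simp only [Complex.sub_re] at this
        linarith [this.1]
      have hnorm : ‖Complex.exp (-x * t) * (-t : ℂ) * (g t : ℂ)‖
          = Real.exp (-x.re * t) * t * |g t| := by
        rw [norm_mul, norm_mul, Complex.norm_exp,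
          Complex.norm_real, Real.norm_eq_abs]
        have : ‖(-t : ℂ)‖ = t := by
          rw [norm_neg, Complex.norm_real, Real.norm_eq_abs, abs_of_pos ht0]
        rw [this]
        congr 2
        simp [Complex.mul_re]
      rw [hnorm]
      have h3 : Real.exp (-x.re * t) ≤ Real.exp (-(z₀.re / 2) * t) := by
        apply Real.exp_le_exp.mpr
        have : z₀.re / 2 * t ≤ x.re * t := mul_le_mul_of_nonneg_right hxre ht0.le
        linarith
      calc Real.exp (-x.re * t) * t * |g t|
          ≤ Real.exp (-(z₀.re / 2) * t) * t * C := by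
            apply mul_le_mul (mul_le_mul_of_nonneg_right h3 ht0.le) (hgbd t ht0.le)
              (abs_nonneg _) (by positivity)
      _ = C * (t * Real.exp (-(z₀.re / 2) * t)) := by ring
    · have := integrableOn_rpow_mul_exp_neg_mul_rpow
        (by norm_num : (-1:ℝ) < 1) one_pos (half_pos hσ)
      simp only [Real.rpow_one] at this
      exact this.const_mul C
    · filter_upwards [ae_restrict_mem measurableSet_Ioi] with t ht
      intro x hx
      have h1 : HasDerivAt (fun z : ℂ => -z * t) (-t : ℂ) x := by
        simpa using ((hasDerivAt_id x).neg.mul_const (t : ℂ))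
      have h2 := (h1.cexp).mul_const ((g t : ℝ) : ℂ)
      simpa using h2
  -- G is differentiable on U
  have hden : ∀ z ∈ U, z ^ (α : ℂ) + (lam : ℂ) ≠ 0 := by
    intro z hz
    have h1 : 0 < (z ^ (α : ℂ)).re := mlAux_re_cpow_pos hz hα0 hα1.le
    intro h
    have h2 : (z ^ (α : ℂ) + (lam : ℂ)).re = 0 := by rw [h]; simp
    simp only [Complex.add_re, Complex.ofReal_re] at h2
    linarith
  have hGdiff : DifferentiableOn ℂ G U := by
    intro z hz
    apply DifferentiableAt.differentiableWithinAt
    have hslit : z ∈ Complex.slitPlane := Or.inl hz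
    exact DifferentiableAt.div
      (differentiableAt_id.cpow (differentiableAt_const _) hslit)
      ((differentiableAt_id.cpow (differentiableAt_const _) hslit).add
        (differentiableAt_const _))
      (hden z hz)
  -- agreement on large reals
  have key : ∀ x : ℝ, 0 < x → lam < x ^ α → F ↑x = G ↑x := by
    intro x hx hlx
    have hxα : 0 < x ^ α := Real.rpow_pos_of_pos hx α
    have hΓ : ∀ k : ℕ, 0 < Real.Gamma (k * α + 1) := mlAux_gamma_pos α hα0
    have hr1 : lam * (x ^ α)⁻¹ < 1 := by
      rw [← div_eq_mul_inv, div_lt_one hxα]; exact hlx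
    have hr0 : (0:ℝ) ≤ lam * (x ^ α)⁻¹ := by positivity
    -- pointwise power identity
    have hpow : ∀ t : ℝ, 0 < t → ∀ k : ℕ,
        (-(lam * t ^ α)) ^ k = (-lam) ^ k * t ^ ((k:ℝ) * α) := by
      intro t ht k
      rw [← neg_mul, mul_pow]
      congr 1
      rw [← Real.rpow_natCast (t ^ α) k, ← Real.rpow_mul ht.le, mul_comm]
    -- base integrability
    have hbase : ∀ k : ℕ, IntegrableOn
        (fun t : ℝ => t ^ ((k:ℝ) * α) * Real.exp (-x * t)) (Set.Ioi 0) := by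
      intro k
      have h := integrableOn_rpow_mul_exp_neg_mul_rpow (s := (k:ℝ) * α) (p := 1) (b := x)
        (lt_of_lt_of_le neg_one_lt_zero (by positivity)) one_pos hx
      simpa [Real.rpow_one] using h
    -- integrability of each term
    have hIk : ∀ k : ℕ, IntegrableOn (fun t : ℝ =>
        Real.exp (-(x * t)) * ((-(lam * t ^ α)) ^ k / Real.Gamma (k * α + 1))) (Set.Ioi 0) := by
      intro k
      refine MeasureTheory.IntegrableOn.congr_fun
        ((hbase k).const_mul ((-lam) ^ k / Real.Gamma (k * α + 1))) ?_ measurableSet_Ioi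
      intro t ht
      have := hpow t ht k
      simp only
      rw [this]
      ring
    -- value of base integral
    have hval : ∀ k : ℕ, ∫ t in Set.Ioi (0:ℝ), t ^ ((k:ℝ) * α) * Real.exp (-(x * t))
        = (1/x) ^ ((k:ℝ) * α + 1) * Real.Gamma ((k:ℝ) * α + 1) := by
      intro k
      have h := Real.integral_rpow_mul_exp_neg_mul_Ioi (a := (k:ℝ) * α + 1) (r := x)
        (by positivity) hx
      simpa using h
    -- value of each term integral
    have hIval : ∀ k : ℕ, ∫ t in Set.Ioi (0:ℝ),
        Real.exp (-(x * t)) * ((-(lam * t ^ α)) ^ k / Real.Gamma (k * α + 1))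
        = (-lam) ^ k * (1/x) ^ ((k:ℝ) * α + 1) := by
      intro k
      calc ∫ t in Set.Ioi (0:ℝ),
            Real.exp (-(x * t)) * ((-(lam * t ^ α)) ^ k / Real.Gamma (k * α + 1))
          = ∫ t in Set.Ioi (0:ℝ), ((-lam) ^ k / Real.Gamma (k * α + 1))
              * (t ^ ((k:ℝ) * α) * Real.exp (-(x * t))) := by
            refine setIntegral_congr_fun measurableSet_Ioi (fun t ht => ?_)
            rw [hpow t ht k]
            ring
      _ = ((-lam) ^ k / Real.Gamma (k * α + 1))
              * ((1/x) ^ ((k:ℝ) * α + 1) * Real.Gamma ((k:ℝ) * α + 1)) := by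
            rw [MeasureTheory.integral_const_mul, hval k]
      _ = (-lam) ^ k * (1/x) ^ ((k:ℝ) * α + 1) := by
            field_simp
    -- measurability of each complex term
    have hmk : ∀ k : ℕ, Measurable (fun t : ℝ =>
        ((Real.exp (-(x * t)) * ((-(lam * t ^ α)) ^ k / Real.Gamma (k * α + 1)) : ℝ) : ℂ)) := by
      intro k
      apply Complex.measurable_ofReal.comp
      apply Measurable.mul
      · exact Real.measurable_exp.comp (measurable_id.const_mul x).neg
      · exact (((((Real.continuous_rpow_const hα0.le).measurable).const_mul
          lam).neg).pow_const k).div_const _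
    -- lintegral of norms
    have hlint : ∀ k : ℕ, (∫⁻ t in Set.Ioi (0:ℝ),
        ‖((Real.exp (-(x * t)) * ((-(lam * t ^ α)) ^ k / Real.Gamma (k * α + 1)) : ℝ) : ℂ)‖₊)
        = ENNReal.ofReal (lam ^ k * (1/x) ^ ((k:ℝ) * α + 1)) := by
      intro k
      calc (∫⁻ t in Set.Ioi (0:ℝ),
            ‖((Real.exp (-(x * t)) * ((-(lam * t ^ α)) ^ k / Real.Gamma (k * α + 1)) : ℝ) : ℂ)‖₊)
          = ∫⁻ t in Set.Ioi (0:ℝ),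
            ‖Real.exp (-(x * t)) * ((-(lam * t ^ α)) ^ k / Real.Gamma (k * α + 1))‖₊ := by
            simp only [Complex.nnnorm_real]
      _ = ENNReal.ofReal (∫ t in Set.Ioi (0:ℝ),
            ‖Real.exp (-(x * t)) * ((-(lam * t ^ α)) ^ k / Real.Gamma (k * α + 1))‖) :=
            (ofReal_integral_norm_eq_lintegral_enorm (hIk k)).symm
      _ = ENNReal.ofReal (lam ^ k * (1/x) ^ ((k:ℝ) * α + 1)) := by
            congr 1
            calc ∫ t in Set.Ioi (0:ℝ),
                ‖Real.exp (-(x * t)) * ((-(lam * t ^ α)) ^ k / Real.Gamma (k * α + 1))‖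
                = ∫ t in Set.Ioi (0:ℝ), (lam ^ k / Real.Gamma (k * α + 1))
                    * (t ^ ((k:ℝ) * α) * Real.exp (-(x * t))) := by
                  refine setIntegral_congr_fun measurableSet_Ioi (fun t ht => ?_)
                  have ht0 : (0:ℝ) < t := ht
                  rw [Real.norm_eq_abs, abs_mul,
                    abs_of_pos (Real.exp_pos _), abs_div, abs_of_pos (hΓ k), abs_pow, abs_neg,
                    abs_of_pos (by positivity : (0:ℝ) < lam * t ^ α), mul_pow,
                    ← Real.rpow_natCast (t ^ α) k, ← Real.rpow_mul ht0.le, mul_comm α (k:ℝ)]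
                  ring
            _ = (lam ^ k / Real.Gamma (k * α + 1))
                    * ((1/x) ^ ((k:ℝ) * α + 1) * Real.Gamma ((k:ℝ) * α + 1)) := by
                  rw [MeasureTheory.integral_const_mul, hval k]
            _ = lam ^ k * (1/x) ^ ((k:ℝ) * α + 1) := by
                  field_simp
    -- geometric rewriting of the terms
    have hterm : ∀ (c : ℝ) (k : ℕ), c ^ k * (1/x) ^ ((k:ℝ) * α + 1)
        = (1/x) * (c * (x ^ α)⁻¹) ^ k := by
      intro c k
      rw [Real.rpow_add (by positivity), Real.rpow_one, mul_comm ((k:ℝ)) α,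
        Real.rpow_mul (by positivity : (0:ℝ) ≤ 1/x), Real.rpow_natCast,
        one_div, Real.inv_rpow hx.le, mul_pow]
      ring
    -- summability of norms
    have hsum_norm : (∑' k : ℕ, ENNReal.ofReal (lam ^ k * (1/x) ^ ((k:ℝ) * α + 1))) ≠ ⊤ := by
      have hsum : Summable (fun k : ℕ => (1/x) * (lam * (x ^ α)⁻¹) ^ k) :=
        (summable_geometric_of_lt_one hr0 hr1).mul_left _
      calc (∑' k : ℕ, ENNReal.ofReal (lam ^ k * (1/x) ^ ((k:ℝ) * α + 1)))
          = ∑' k : ℕ, ENNReal.ofReal ((1/x) * (lam * (x ^ α)⁻¹) ^ k) := by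
            exact tsum_congr (fun k => by rw [hterm lam k])
      _ = ENNReal.ofReal (∑' k : ℕ, (1/x) * (lam * (x ^ α)⁻¹) ^ k) :=
            (ENNReal.ofReal_tsum_of_nonneg (fun k => by positivity) hsum).symm
      _ ≠ ⊤ := ENNReal.ofReal_ne_top
    -- the integrand as a series
    have hintegrand : ∀ t : ℝ, Complex.exp (-(x:ℂ) * t) * (g t : ℂ)
        = ∑' k : ℕ, ((Real.exp (-(x * t)) * ((-(lam * t ^ α)) ^ k / Real.Gamma (k * α + 1)) : ℝ) : ℂ) := by
      intro t
      rw [hgdef]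
      simp only [mittagLefflerReal]
      rw [Complex.ofReal_tsum, ← tsum_mul_left]
      refine tsum_congr (fun k => ?_)
      rw [Complex.ofReal_mul, Complex.ofReal_exp]
      push_cast
      ring
    -- put everything together
    calc F ↑x = ∫ t in Set.Ioi (0:ℝ), ∑' k : ℕ,
          ((Real.exp (-(x * t)) * ((-(lam * t ^ α)) ^ k / Real.Gamma (k * α + 1)) : ℝ) : ℂ) := by
          rw [hFdef]
          exact setIntegral_congr_fun measurableSet_Ioi (fun t _ => hintegrand t)
    _ = ∑' k : ℕ, ∫ t in Set.Ioi (0:ℝ),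
          ((Real.exp (-(x * t)) * ((-(lam * t ^ α)) ^ k / Real.Gamma (k * α + 1)) : ℝ) : ℂ) := by
          refine integral_tsum (fun k => (hmk k).aestronglyMeasurable) ?_
          exact ne_of_eq_of_ne (tsum_congr (fun k => hlint k)) hsum_norm
    _ = ∑' k : ℕ, (((-lam) ^ k * (1/x) ^ ((k:ℝ) * α + 1) : ℝ) : ℂ) := by
          refine tsum_congr (fun k => ?_)
          rw [show (∫ t in Set.Ioi (0:ℝ),
              ((Real.exp (-(x * t)) * ((-(lam * t ^ α)) ^ k / Real.Gamma (k * α + 1)) : ℝ) : ℂ))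
            = ((∫ t in Set.Ioi (0:ℝ),
              Real.exp (-(x * t)) * ((-(lam * t ^ α)) ^ k / Real.Gamma (k * α + 1)) : ℝ) : ℂ)
            from integral_ofReal, hIval k]
    _ = ((∑' k : ℕ, (-lam) ^ k * (1/x) ^ ((k:ℝ) * α + 1) : ℝ) : ℂ) :=
          (Complex.ofReal_tsum _).symm
    _ = (((1/x) * (1 + lam * (x ^ α)⁻¹)⁻¹ : ℝ) : ℂ) := by
          congr 1
          calc (∑' k : ℕ, (-lam) ^ k * (1/x) ^ ((k:ℝ) * α + 1) : ℝ)
              = ∑' k : ℕ, (1/x) * (-(lam * (x ^ α)⁻¹)) ^ k := by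
                refine tsum_congr (fun k => ?_)
                rw [hterm (-lam) k, neg_mul]
          _ = (1/x) * (1 - -(lam * (x ^ α)⁻¹))⁻¹ := by
                rw [tsum_mul_left, tsum_geometric_of_norm_lt_one
                  (by rw [norm_neg, Real.norm_eq_abs, abs_of_nonneg hr0]; exact hr1)]
          _ = (1/x) * (1 + lam * (x ^ α)⁻¹)⁻¹ := by rw [sub_neg_eq_add]
    _ = ((x ^ (α - 1) / (x ^ α + lam) : ℝ) : ℂ) := by
          congr 1
          have h1 : x ^ (α - 1) = x ^ α / x := by
            rw [Real.rpow_sub hx, Real.rpow_one]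
          rw [h1]
          have hden1 : (0:ℝ) < 1 + lam * (x ^ α)⁻¹ := by positivity
          field_simp
    _ = G ↑x := by
          rw [hGdef]
          simp only
          rw [Complex.ofReal_div, Complex.ofReal_cpow hx.le, Complex.ofReal_add,
            Complex.ofReal_cpow hx.le, Complex.ofReal_sub, Complex.ofReal_one]
  -- identity theorem
  set T : ℝ := lam ^ (1/α) + 2 with hTdef
  have hT0 : 0 < T := by
    have : (0:ℝ) ≤ lam ^ (1/α) := Real.rpow_nonneg hlam.le _
    simp only [hTdef]; linarith
  have hkeyT : ∀ s : ℝ, 0 ≤ s → F ↑(T + s) = G ↑(T + s) := by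
    intro s hs
    apply key _ (by linarith)
    have h1 : lam ^ (1/α) < T + s := by simp only [hTdef]; linarith
    have h2 : (lam ^ (1/α)) ^ α < (T + s) ^ α :=
      Real.rpow_lt_rpow (Real.rpow_nonneg hlam.le _) h1 hα0
    rwa [← Real.rpow_mul hlam.le, one_div, inv_mul_cancel₀ hα0.ne', Real.rpow_one] at h2
  have heq : Set.EqOn F G U := by
    apply AnalyticOnNhd.eqOn_of_preconnected_of_frequently_eq
      (hFdiff.analyticOnNhd hUopen) (hGdiff.analyticOnNhd hUopen) hUconn
      (show ((T:ℝ):ℂ) ∈ U by simpa [hUdef] using hT0)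
    have htend : Tendsto (fun n : ℕ => ((T + 1/(n+1) : ℝ) : ℂ)) atTop (𝓝[≠] ((T:ℝ):ℂ)) := by
      apply tendsto_nhdsWithin_of_tendsto_nhds_of_eventually_within
      · have hre : Tendsto (fun n : ℕ => T + 1/((n:ℝ)+1)) atTop (𝓝 T) := by
          have := tendsto_one_div_add_atTop_nhds_zero_nat (𝕜 := ℝ)
          simpa using (tendsto_const_nhds (x := T)).add this
        exact (Complex.continuous_ofReal.tendsto T).comp hre
      · apply Eventually.of_forall
        intro n
        simp only [Set.mem_compl_iff, Set.mem_singleton_iff]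
        intro h
        have := Complex.ofReal_injective h
        have hp : 0 < 1/((n:ℝ)+1) := by positivity
        linarith [this]
    exact htend.frequently (Eventually.of_forall (fun n => hkeyT _ (by positivity))).frequently
  intro z hz
  exact ⟨hint z hz, heq hz⟩
end
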